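/- In the superstar Plackett–Luce model with one item of value v₁ and n−1 items of value v₂ < v₁ and Gumbel noise scale β, the total probability that the high-value item is ranked in position i equals P[σ^i] = (e^{(v₁−v₂)/β} / (e^{(v₁−v₂)/β} + n − 1)) · ∏_{k=1}^{i−1} 1 / (1 + (e^{(v₁−v₂)/β} − 1)/(n − k)). -/

import Mathlib

open Finset

/-- Plackett–Luce probability of observing the ordering `σ` (rank `j` holds
item `σ j`) for values `w` and Gumbel noise scale `β`. -/
noncomputable def PLProb {n : ℕ} (β : ℝ) (w : Fin n → ℝ) (σ : Equiv.Perm (Fin n)) : ℝ :=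
  ∏ j : Fin n,
    Real.exp (w (σ j) / β) /
      ∑ ℓ ∈ Finset.univ.filter (fun ℓ : Fin n => j ≤ ℓ), Real.exp (w (σ ℓ) / β)

lemma card_eval_zero (m : ℕ) (p : Fin (m+1)) :
    (univ.filter (fun σ : Equiv.Perm (Fin (m+1)) => σ 0 = p)).card = m.factorial := by
  have hc : m.factorial = Fintype.card (Equiv.Perm (Fin m)) := by simp [Fintype.card_perm]
  rw [hc]
  rw [← Finset.card_univ]
  apply Finset.card_nbij' (fun σ => (Equiv.Perm.decomposeFin σ).2)
      (fun e => Equiv.Perm.decomposeFin.symm (p, e))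
  · intro σ hσ; simp
  · intro e he
    simp only [coe_filter, mem_filter, mem_univ, true_and, Set.mem_setOf_eq]
    exact Equiv.Perm.decomposeFin_symm_apply_zero p e
  · intro σ hσ
    simp only [coe_filter, mem_filter, mem_univ, true_and, Set.mem_setOf_eq] at hσ
    have h0 : (Equiv.Perm.decomposeFin σ).1 = p := by
      have := Equiv.Perm.decomposeFin_symm_apply_zero (Equiv.Perm.decomposeFin σ).1
        (Equiv.Perm.decomposeFin σ).2
      rw [Prod.mk.eta, Equiv.symm_apply_apply] at this
      rw [← this, hσ]
    simp only [← h0, Prod.mk.eta, Equiv.symm_apply_apply]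
  · intro e he
    simp

lemma card_eval (m : ℕ) (i : Fin (m+1)) :
    (univ.filter (fun σ : Equiv.Perm (Fin (m+1)) => σ i = 0)).card = m.factorial := by
  rw [← card_eval_zero m i]
  apply Finset.card_nbij' (fun σ => σ⁻¹) (fun σ => σ⁻¹)
  · intro σ hσ
    simp only [coe_filter, mem_filter, mem_univ, true_and, Set.mem_setOf_eq] at hσ ⊢
    rw [← hσ, Equiv.Perm.inv_def, Equiv.symm_apply_apply]
  · intro σ hσ
    simp only [coe_filter, mem_filter, mem_univ, true_and, Set.mem_setOf_eq] at hσ ⊢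
    rw [← hσ, Equiv.Perm.inv_def, Equiv.symm_apply_apply]
  · intro σ _; simp
  · intro σ _; simp

lemma PL_eq (m : ℕ) (v₁ v₂ β : ℝ) (w : Fin (m+1) → ℝ)
    (hw : ∀ x : Fin (m+1), w x = if (x : ℕ) = 0 then v₁ else v₂)
    (i : Fin (m+1)) (σ : Equiv.Perm (Fin (m+1))) (hσ : σ i = 0) :
    PLProb β w σ = ∏ j ∈ range (m+1),
      (if j = i.val then Real.exp (v₁/β) else Real.exp (v₂/β)) /
        ((if j ≤ i.val then Real.exp (v₁/β) - Real.exp (v₂/β) else 0)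
          + ((m+1:ℝ) - j) * Real.exp (v₂/β)) := by
  set a := Real.exp (v₁/β)
  set b := Real.exp (v₂/β)
  have key : ∀ ℓ : Fin (m+1), Real.exp (w (σ ℓ) / β) = if ℓ = i then a else b := by
    intro ℓ
    have hiff : ((σ ℓ : Fin (m+1)) : ℕ) = 0 ↔ ℓ = i := by
      rw [← Fin.val_zero (m+1), Fin.val_eq_val, ← hσ, EmbeddingLike.apply_eq_iff_eq]
    rw [hw]
    by_cases h : ℓ = i
    · subst h; simp [hσ]; rfl
    · rw [if_neg (fun hc => h (hiff.mp hc)), if_neg h]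
  rw [PLProb, ← Fin.prod_univ_eq_prod_range]
  apply Finset.prod_congr rfl
  intro j _
  congr 1
  · rw [key j]
    by_cases h : j = i
    · simp [h]
    · rw [if_neg ((Fin.val_eq_val j i).not.mpr h), if_neg h]
  · calc ∑ ℓ ∈ univ.filter (fun ℓ : Fin (m+1) => j ≤ ℓ), Real.exp (w (σ ℓ) / β)
        = ∑ ℓ ∈ univ.filter (fun ℓ : Fin (m+1) => j ≤ ℓ),
            ((if ℓ = i then a - b else 0) + b) := by
          apply Finset.sum_congr rfl
          intro ℓ _
          rw [key ℓ]
          by_cases h : ℓ = i <;> simp [h]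
      _ = (if i ∈ univ.filter (fun ℓ : Fin (m+1) => j ≤ ℓ) then a - b else 0)
            + (univ.filter (fun ℓ : Fin (m+1) => j ≤ ℓ)).card • b := by
          rw [Finset.sum_add_distrib, Finset.sum_const, Finset.sum_ite_eq']
      _ = (if j.val ≤ i.val then a - b else 0) + ((m+1:ℝ) - j.val) * b := by
          have hfilter : univ.filter (fun ℓ : Fin (m+1) => j ≤ ℓ) = Finset.Ici j := by
            ext x; simp
          rw [hfilter, Fin.card_Ici]
          simp only [Finset.mem_Ici, Fin.le_def]
          congr 1
          rw [nsmul_eq_mul]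
          congr 1
          have : j.val ≤ m + 1 := le_of_lt j.isLt
          push_cast [Nat.cast_sub this]
          ring

lemma algebra_step (m M : ℕ) (hM : M ≤ m) (a b : ℝ) (hb : 0 < b) (hab : b < a) :
    (m.factorial : ℝ) * ∏ j ∈ range (m+1),
      ((if j = M then a else b) / ((if j ≤ M then a - b else 0) + ((m+1:ℝ) - j) * b))
    = (a/b) / (a/b + (m:ℝ)) * ∏ k ∈ range M, 1 / (1 + (a/b - 1) / ((m:ℝ) - k)) := by
  have hb' : b ≠ 0 := ne_of_gt hb
  set g : ℕ → ℝ := fun j => (a - b) + ((m+1:ℝ) - j) * b with hgdef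
  have hgpos : ∀ j : ℕ, j ≤ m + 1 → 0 < g j := by
    intro j hj
    have hj' : (j:ℝ) ≤ (m+1:ℝ) := by exact_mod_cast hj
    have h1 : 0 ≤ ((m+1:ℝ) - j) * b := mul_nonneg (by linarith) hb.le
    show 0 < (a - b) + ((m+1:ℝ) - j) * b
    nlinarith
  -- split the product
  rw [range_eq_Ico, ← Finset.prod_Ico_consecutive _ (Nat.zero_le (M+1)) (by omega : M+1 ≤ m+1),
    ← range_eq_Ico, Finset.prod_range_succ]
  have hhead : ∀ j ∈ range M,
      ((if j = M then a else b) / ((if j ≤ M then a - b else 0) + ((m+1:ℝ) - j) * b))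
        = b / g j := by
    intro j hj
    rw [mem_range] at hj
    rw [if_neg (by omega), if_pos (by omega)]
  have hmid : ((if M = M then a else b) / ((if M ≤ M then a - b else 0) + ((m+1:ℝ) - M) * b))
      = a / g M := by rw [if_pos rfl, if_pos le_rfl]
  have htail : ∀ j ∈ Ico (M+1) (m+1),
      ((if j = M then a else b) / ((if j ≤ M then a - b else 0) + ((m+1:ℝ) - j) * b))
        = 1 / ((m+1:ℝ) - j) := by
    intro j hj
    rw [mem_Ico] at hj
    rw [if_neg (by omega), if_neg (by omega), zero_add, mul_comm, ← div_div, div_self hb']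
  rw [Finset.prod_congr rfl hhead, hmid, Finset.prod_congr rfl htail]
  -- tail value
  have htv : ∏ j ∈ Ico (M+1) (m+1), (1 / ((m+1:ℝ) - j)) = 1 / ((m-M).factorial : ℝ) := by
    rw [Finset.prod_div_distrib, Finset.prod_const_one]
    congr 1
    have hc : ∀ j ∈ Ico (M+1) (m+1), (m+1:ℝ) - j = ((m+1-j : ℕ):ℝ) := by
      intro j hj
      rw [mem_Ico] at hj
      have : j ≤ m + 1 := by omega
      push_cast [Nat.cast_sub this]
      ring
    rw [Finset.prod_congr rfl hc, ← Nat.cast_prod]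
    congr 1
    rw [Finset.prod_Ico_eq_prod_range]
    have h1 : m + 1 - (M+1) = m - M := by omega
    rw [h1]
    have h2 : ∀ t ∈ range (m-M), m + 1 - (M+1+t) = (m-M) - t := by
      intro t ht; omega
    rw [Finset.prod_congr rfl h2, ← Nat.descFactorial_eq_prod_range, Nat.descFactorial_self]
  rw [htv]
  -- head products
  have hbp : ∏ j ∈ range M, b / g j = b^M / ∏ j ∈ range M, g j := by
    rw [Finset.prod_div_distrib, Finset.prod_const, Finset.card_range]
  rw [hbp]
  -- RHS transformation
  have hr0 : (a/b) / (a/b + (m:ℝ)) = a / g 0 := by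
    have : g 0 = a + m * b := by simp only [hgdef]; push_cast; ring
    rw [this]
    have h2 : a + (m:ℝ) * b ≠ 0 := by nlinarith [mul_nonneg (Nat.cast_nonneg (α := ℝ) m) hb.le]
    field_simp
  have hrk : ∀ k ∈ range M, 1 / (1 + (a/b - 1) / ((m:ℝ) - k)) = ((m:ℝ) - k) * b / g (k+1) := by
    intro k hk
    rw [mem_range] at hk
    have hc : (0:ℝ) < (m:ℝ) - k := by
      have : (k:ℝ) < (M:ℝ) := by exact_mod_cast hk
      have : (M:ℝ) ≤ (m:ℝ) := by exact_mod_cast hM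
      linarith
    have hg1 : g (k+1) = (a - b) + ((m:ℝ) - k) * b := by
      simp only [hgdef]; push_cast; ring
    have hgne : g (k+1) ≠ 0 := ne_of_gt (hgpos (k+1) (by omega))
    rw [hg1] at hgne ⊢
    rw [show 1 + (a/b - 1) / ((m:ℝ) - k) = ((a - b) + ((m:ℝ) - k) * b) / (((m:ℝ) - k) * b) by
      field_simp; ring, one_div, inv_div]
  rw [hr0, Finset.prod_congr rfl hrk]
  have hrp : ∏ k ∈ range M, ((m:ℝ) - k) * b / g (k+1)
      = (∏ k ∈ range M, ((m:ℝ) - k)) * b^M / ∏ k ∈ range M, g (k+1) := by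
    rw [Finset.prod_div_distrib, Finset.prod_mul_distrib, Finset.prod_const, Finset.card_range]
  rw [hrp]
  -- factorial identity
  have hD : ∏ k ∈ range M, ((m:ℝ) - k) = (m.descFactorial M : ℝ) := by
    have hc : ∀ k ∈ range M, (m:ℝ) - k = ((m - k : ℕ):ℝ) := by
      intro k hk
      rw [mem_range] at hk
      have : k ≤ m := by omega
      push_cast [Nat.cast_sub this]
      ring
    rw [Finset.prod_congr rfl hc, ← Nat.cast_prod, Nat.descFactorial_eq_prod_range]
  have hfact : (m.factorial : ℝ) = (∏ k ∈ range M, ((m:ℝ) - k)) * ((m-M).factorial : ℝ) := by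
    rw [hD, ← Nat.cast_mul, mul_comm, Nat.factorial_mul_descFactorial hM]
  -- product shift identity
  have hprod : (∏ j ∈ range M, g j) * g M = g 0 * ∏ k ∈ range M, g (k+1) := by
    rw [← Finset.prod_range_succ, Finset.prod_range_succ']
    ring
  -- finish
  have hPg : (∏ j ∈ range M, g j) ≠ 0 := by
    apply Finset.prod_ne_zero_iff.mpr
    intro j hj; rw [mem_range] at hj; exact ne_of_gt (hgpos j (by omega))
  have hPg' : (∏ k ∈ range M, g (k+1)) ≠ 0 := by
    apply Finset.prod_ne_zero_iff.mpr
    intro j hj; rw [mem_range] at hj; exact ne_of_gt (hgpos (j+1) (by omega))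
  have hgM : g M ≠ 0 := ne_of_gt (hgpos M (by omega))
  have hg0 : g 0 ≠ 0 := ne_of_gt (hgpos 0 (by omega))
  have hF : ((m-M).factorial : ℝ) ≠ 0 := by exact_mod_cast (m-M).factorial_ne_zero
  rw [hfact]
  rw [div_mul_div_comm, div_mul_div_comm, mul_one, mul_div_assoc' _ _ ((∏ j ∈ range M, g j) * g M * ((m-M).factorial : ℝ)), div_mul_div_comm]
  rw [div_eq_div_iff (by positivity) (by
    apply mul_ne_zero hg0 hPg')]
  linear_combination (-((∏ k ∈ range M, ((m:ℝ) - k)) * ((m-M).factorial : ℝ) * b^M * a)) * hprod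

/-- In the superstar Plackett–Luce model (one item of value `v₁`,
the other `n-1` items of value `v₂ < v₁`, Gumbel noise scale `β > 0`), the
total probability that the high-value item is ranked in position `i`
(1-indexed position `i.val + 1`) equals
`(e^{(v₁−v₂)/β}/(e^{(v₁−v₂)/β}+n−1)) · ∏_{k=1}^{i−1} 1/(1+(e^{(v₁−v₂)/β}−1)/(n−k))`. -/
theorem stmt2
    (n : ℕ) (hn : 0 < n) (v₁ v₂ β : ℝ) (hβ : 0 < β) (hv : v₂ < v₁)
    (w : Fin n → ℝ) (hw : ∀ m : Fin n, w m = if (m : ℕ) = 0 then v₁ else v₂)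
    (i : Fin n) :
    ∑ σ ∈ Finset.univ.filter (fun σ : Equiv.Perm (Fin n) => ((σ i : Fin n) : ℕ) = 0),
        PLProb β w σ =
      Real.exp ((v₁ - v₂) / β) / (Real.exp ((v₁ - v₂) / β) + (n - 1)) *
        ∏ k ∈ Finset.range i.val,
          1 / (1 + (Real.exp ((v₁ - v₂) / β) - 1) / ((n : ℝ) - (k + 1))) := by
  obtain ⟨m, rfl⟩ : ∃ m, n = m + 1 := ⟨n - 1, by omega⟩
  set a := Real.exp (v₁ / β) with ha
  set b := Real.exp (v₂ / β) with hb
  have hab : b < a := by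
    apply Real.exp_lt_exp.mpr
    have h1 : 0 < (v₁ - v₂) / β := div_pos (by linarith) hβ
    rw [sub_div] at h1
    linarith
  have hfeq : Finset.univ.filter (fun σ : Equiv.Perm (Fin (m+1)) => ((σ i : Fin (m+1)) : ℕ) = 0)
      = Finset.univ.filter (fun σ : Equiv.Perm (Fin (m+1)) => σ i = 0) := by
    ext σ
    simp only [mem_filter, mem_univ, true_and]
    exact Fin.val_eq_zero_iff
  rw [hfeq]
  rw [Finset.sum_congr rfl (fun σ hσ => PL_eq m v₁ v₂ β w hw i σ (by
    simpa only [mem_filter, mem_univ, true_and] using hσ))]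
  rw [Finset.sum_const, card_eval, nsmul_eq_mul]
  rw [algebra_step m i.val (Nat.lt_succ_iff.mp i.isLt) a b (Real.exp_pos _) hab]
  have hr : Real.exp ((v₁ - v₂) / β) = a / b := by rw [sub_div, Real.exp_sub]
  rw [hr]
  congr 1
  · congr 1
    push_cast
    ring
  · apply Finset.prod_congr rfl
    intro k hk
    have : ((m+1:ℕ):ℝ) - ((k:ℝ) + 1) = (m:ℝ) - k := by push_cast; ring
    rw [this]
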